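/- Let T^o, Q_i, T_s be constants and suppose the controller state (Z, u, Z_f, ζ, λ, μ^+, μ^-) is at an equilibrium of dynamics (6) (in particular ζ̇_i = 0 and λ̇_i = 0), so that Z satisfies (T^o − Z_i)/R_i + Σ_{j∈N(i)} (Z_j − Z_i)/R_{ij} + (Z_{fi} − Z_i)/R_{afi} + Q_i = 0 and (Z_i − Z_{fi})/R_{afi} + u_i = 0. Let q_i = u_i/(c_w (T_s − Z_{fi})) with T_s ≠ Z_{fi} and q_i ≥ 0, and suppose (T_i, T_{fi}, T_{wi})_{i∈N} is an equilibrium of the plant dynamics (1)-(2) under these constant inputs q_i, T_s, T^o, Q_i. Then T_i = Z_i and T_{fi} = Z_{fi} for every i ∈ N. -/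

import Mathlib

open Finset

/-- If the controller is at an equilibrium of dynamics (6) (so that the
steady-state equations of `ζ` and `λ` hold for `(Z, u, Z_f)`), the input is
`qᵢ = uᵢ/(c_w (Ts − Z_{fi}))` with `qᵢ ≥ 0`, and `(T, T_f, T_w)` is an equilibrium of the
plant (1)-(2) under these constant inputs, then `Tᵢ = Zᵢ` and `T_{fi} = Z_{fi}` for all
`i`. -/
theorem stmt_16
    (n : ℕ) (hn : 0 < n)
    (G : SimpleGraph (Fin n)) [DecidableRel G.Adj] (hG : G.Connected)
    (C Cf Cw Ri Raf Rfw : Fin n → ℝ) (Rij : Fin n → Fin n → ℝ)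
    (hC : ∀ i, 0 < C i) (hCf : ∀ i, 0 < Cf i) (hCw : ∀ i, 0 < Cw i)
    (hRi : ∀ i, 0 < Ri i) (hRaf : ∀ i, 0 < Raf i) (hRfw : ∀ i, 0 < Rfw i)
    (hRij : ∀ i j, G.Adj i j → 0 < Rij i j) (hRsym : ∀ i j, Rij i j = Rij j i)
    (cw : ℝ) (hcw : 0 < cw)
    (To : ℝ) (Q : Fin n → ℝ) (Ts : ℝ)
    -- controller equilibrium values and multipliers
    (Z u Zf : Fin n → ℝ)
    -- ζ̇ᵢ = 0 : the zone steady-state equation holds for (Z, Z_f)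
    (hζeq : ∀ i, (To - Z i) / Ri i + (∑ j ∈ G.neighborFinset i, (Z j - Z i) / Rij i j)
        + (Zf i - Z i) / Raf i + Q i = 0)
    -- λ̇ᵢ = 0 : the floor steady-state equation holds for (Z, u, Z_f)
    (hlameq : ∀ i, (Z i - Zf i) / Raf i + u i = 0)
    -- the control input
    (q : Fin n → ℝ) (hTsZf : ∀ i, Ts ≠ Zf i)
    (hqdef : ∀ i, q i = u i / (cw * (Ts - Zf i))) (hq : ∀ i, 0 ≤ q i)
    -- plant equilibrium under the constant inputs q, Ts, To, Q
    (T Tf Tw : Fin n → ℝ)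
    (hTeq : ∀ i, (To - T i) / Ri i + (∑ j ∈ G.neighborFinset i, (T j - T i) / Rij i j)
        + (Tf i - T i) / Raf i + Q i = 0)
    (hTfeq : ∀ i, (T i - Tf i) / Raf i + (Tw i - Tf i) / Rfw i = 0)
    (hTweq : ∀ i, (Tf i - Tw i) / Rfw i + cw * q i * (Ts - Tf i) = 0) :
  ∀ i, T i = Z i ∧ Tf i = Zf i := by
  -- u in terms of q
  have hu : ∀ i, u i = cw * q i * (Ts - Zf i) := by
    intro i
    have hne : cw * (Ts - Zf i) ≠ 0 :=
      mul_ne_zero (ne_of_gt hcw) (sub_ne_zero.mpr (hTsZf i))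
    rw [hqdef i]
    field_simp [sub_ne_zero.mpr (hTsZf i)]
  -- combined plant floor equation
  have hfloorT : ∀ i, (T i - Tf i) / Raf i + cw * q i * (Ts - Tf i) = 0 := by
    intro i
    have h1 := hTfeq i
    have h2 := hTweq i
    have h3 : (Tw i - Tf i) / Rfw i = -((Tf i - Tw i) / Rfw i) := by ring
    linarith
  -- difference floor equation
  have hD2 : ∀ i, (T i - Z i) - (Tf i - Zf i) = Raf i * (cw * q i * (Tf i - Zf i)) := by
    intro i
    have h1 := hfloorT i
    have h2 := hlameq i
    rw [hu i] at h2
    have hr : Raf i ≠ 0 := ne_of_gt (hRaf i)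
    field_simp at h1 h2
    linarith
  -- relation e = f * (1 + Raf cw q)
  have hef : ∀ i, (T i - Z i) = (Tf i - Zf i) * (1 + Raf i * (cw * q i)) := by
    intro i; have := hD2 i; ring_nf; ring_nf at this; linarith
  have hpos : ∀ i, 0 < 1 + Raf i * (cw * q i) := by
    intro i
    have : 0 ≤ Raf i * (cw * q i) :=
      mul_nonneg (le_of_lt (hRaf i)) (mul_nonneg (le_of_lt hcw) (hq i))
    linarith
  -- difference zone equation
  have hD1 : ∀ i, (T i - Z i) / Ri i + (T i - Z i - (Tf i - Zf i)) / Raf i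
      = ∑ j ∈ G.neighborFinset i, ((T j - Z j) - (T i - Z i)) / Rij i j := by
    intro i
    have h1 := hTeq i
    have h2 := hζeq i
    have hsum : ∑ j ∈ G.neighborFinset i, ((T j - Z j) - (T i - Z i)) / Rij i j
        = (∑ j ∈ G.neighborFinset i, (T j - T i) / Rij i j)
          - (∑ j ∈ G.neighborFinset i, (Z j - Z i) / Rij i j) := by
      rw [← Finset.sum_sub_distrib]
      exact Finset.sum_congr rfl (fun j _ => by ring)
    rw [hsum]
    have hr : Ri i ≠ 0 := ne_of_gt (hRi i)
    have ha : Raf i ≠ 0 := ne_of_gt (hRaf i)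
    have e1 : (To - T i) / Ri i - (To - Z i) / Ri i = -((T i - Z i) / Ri i) := by
      field_simp; ring
    have e2 : (Tf i - T i) / Raf i - (Zf i - Z i) / Raf i
        = -((T i - Z i - (Tf i - Zf i)) / Raf i) := by
      field_simp; ring
    linarith
  -- at the argmax of e, e ≤ 0
  have key : ∀ i0, (∀ j, T j - Z j ≤ T i0 - Z i0) → T i0 - Z i0 ≤ 0 := by
    intro i0 hmax
    have hsumle : ∑ j ∈ G.neighborFinset i0, ((T j - Z j) - (T i0 - Z i0)) / Rij i0 j ≤ 0 := by
      apply Finset.sum_nonpos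
      intro j hj
      have hadj : G.Adj i0 j := (G.mem_neighborFinset i0 j).mp hj
      exact div_nonpos_of_nonpos_of_nonneg (by linarith [hmax j]) (le_of_lt (hRij i0 j hadj))
    have h1 := hD1 i0
    have h2 := hD2 i0
    have h3 := hpos i0
    have h4 := hef i0
    by_contra hcon
    push_neg at hcon
    -- e i0 > 0 so f i0 > 0
    have hf0 : 0 < Tf i0 - Zf i0 := by
      by_contra hf
      push_neg at hf
      nlinarith
    have hqf : 0 ≤ cw * q i0 * (Tf i0 - Zf i0) :=
      mul_nonneg (mul_nonneg (le_of_lt hcw) (hq i0)) (le_of_lt hf0)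
    have h5 : (T i0 - Z i0 - (Tf i0 - Zf i0)) / Raf i0 = cw * q i0 * (Tf i0 - Zf i0) := by
      rw [h2]
      exact mul_div_cancel_left₀ _ (ne_of_gt (hRaf i0))
    have h6 : 0 < (T i0 - Z i0) / Ri i0 := div_pos hcon (hRi i0)
    rw [h5] at h1
    linarith
  have keymin : ∀ i0, (∀ j, T i0 - Z i0 ≤ T j - Z j) → 0 ≤ T i0 - Z i0 := by
    intro i0 hmin
    have hsumge : 0 ≤ ∑ j ∈ G.neighborFinset i0, ((T j - Z j) - (T i0 - Z i0)) / Rij i0 j := by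
      apply Finset.sum_nonneg
      intro j hj
      have hadj : G.Adj i0 j := (G.mem_neighborFinset i0 j).mp hj
      exact div_nonneg (by linarith [hmin j]) (le_of_lt (hRij i0 j hadj))
    have h1 := hD1 i0
    have h2 := hD2 i0
    have h3 := hpos i0
    have h4 := hef i0
    by_contra hcon
    push_neg at hcon
    have hf0 : Tf i0 - Zf i0 < 0 := by
      by_contra hf
      push_neg at hf
      nlinarith
    have hqf : cw * q i0 * (Tf i0 - Zf i0) ≤ 0 :=
      mul_nonpos_of_nonneg_of_nonpos (mul_nonneg (le_of_lt hcw) (hq i0)) (le_of_lt hf0)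
    have h5 : (T i0 - Z i0 - (Tf i0 - Zf i0)) / Raf i0 = cw * q i0 * (Tf i0 - Zf i0) := by
      rw [h2]; exact mul_div_cancel_left₀ _ (ne_of_gt (hRaf i0))
    have h6 : (T i0 - Z i0) / Ri i0 < 0 := div_neg_of_neg_of_pos hcon (hRi i0)
    rw [h5] at h1
    linarith
  haveI : Nonempty (Fin n) := ⟨⟨0, hn⟩⟩
  obtain ⟨imax, hmax⟩ := Finite.exists_max (fun i => T i - Z i)
  obtain ⟨imin, hmin⟩ := Finite.exists_min (fun i => T i - Z i)
  have hmaxle := key imax hmax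
  have hminge := keymin imin hmin
  have hezero : ∀ i, T i - Z i = 0 := by
    intro i
    have := hmax i
    have := hmin i
    linarith
  intro i
  have he := hezero i
  have hf : Tf i - Zf i = 0 := by
    have h4 := hef i
    have h3 := hpos i
    rw [he] at h4
    rcases mul_eq_zero.mp h4.symm with h | h
    · exact h
    · linarith
  constructor <;> linarith
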